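/- Let G be a countable group, A a finite set, F ⊆ G a finite symmetric subset containing the identity, and ε > 0. Let F' = F·F. Suppose φ: G → Sym(A) satisfies φ(1) = 1, d(φ(gh), φ(g)φ(h)) < ε for all g,h ∈ F' (normalized Hamming distance d), and d(1, φ(g)) > 1 − ε for all non-identity g ∈ F'. Then the set S of points s ∈ A such that (i) φ(g)s ≠ φ(h)s for all distinct g,h ∈ F and (ii) φ(gh)s = φ(g)φ(h)s for all g,h ∈ F, satisfies |S| > (1 − 4|F|²ε)|A|. -/

import Mathlib

open scoped Classical Pointwise

noncomputable def hDist {A : Type*} [Fintype A] (σ τ : Equiv.Perm A) : ℝ :=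
  ((Finset.univ.filter fun a => σ a ≠ τ a).card : ℝ) / (Fintype.card A : ℝ)

/-- `φ : G → Sym(Fin n)` is an `(F, E, ε)`-orbit approximation of the action `α : G ↷ X`. -/
def IsOrbitApprox {G X : Type*} [Group G] {n : ℕ} (α : G →* Equiv.Perm X)
    (F : Finset G) (E : Finset X) (ε : ℝ) (φ : G → Equiv.Perm (Fin n)) : Prop :=
  ∃ (m : ℕ) (S : Finset (Fin n)) (π : Fin n → X → Fin m),
    ((S.card : ℝ) > (1 - ε) * (n : ℝ)) ∧
    (∀ s ∈ S, Set.InjOn (π s) (E : Set X)) ∧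
    (∀ s ∈ S, ∀ g ∈ F, ∀ x ∈ E, φ g s ∈ S → α g⁻¹ x ∈ E →
      π (φ g s) x = π s (α g⁻¹ x))

/-- Soficity of an action `α : G ↷ X` given as a homomorphism `G →* Sym(X)`. -/
def SoficAction {G X : Type*} [Group G] (α : G →* Equiv.Perm X) : Prop :=
  ∀ (F : Finset G) (E : Finset X) (ε : ℝ), 0 < ε →
    ∃ (n : ℕ) (φ : G → Equiv.Perm (Fin n)),
      φ 1 = 1 ∧
      (∀ g ∈ F, ∀ h ∈ F, hDist (φ (g * h)) (φ g * φ h) < ε) ∧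
      IsOrbitApprox α F E ε φ

/-- Soficity of a group. -/
def SoficGroup (G : Type*) [Group G] : Prop :=
  ∀ (F : Finset G) (ε : ℝ), 0 < ε →
    ∃ (n : ℕ) (φ : G → Equiv.Perm (Fin n)),
      φ 1 = 1 ∧
      (∀ g ∈ F, ∀ h ∈ F, hDist (φ (g * h)) (φ g * φ h) < ε) ∧
      (∀ g ∈ F, g ≠ 1 → hDist 1 (φ g) > 1 - ε)

theorem stmt_0 {G A : Type*} [Group G] [Countable G] [Fintype A] [Nonempty A]
    (F : Finset G) (hsym : ∀ g ∈ F, g⁻¹ ∈ F) (h1F : (1 : G) ∈ F)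
    (ε : ℝ) (hε : 0 < ε) (φ : G → Equiv.Perm A) (hunital : φ 1 = 1)
    (hmul : ∀ g ∈ F * F, ∀ h ∈ F * F, hDist (φ (g * h)) (φ g * φ h) < ε)
    (hsep : ∀ g ∈ F * F, g ≠ 1 → hDist 1 (φ g) > 1 - ε) :
    (((Finset.univ.filter fun s : A =>
        (∀ g ∈ F, ∀ h ∈ F, g ≠ h → φ g s ≠ φ h s) ∧
        (∀ g ∈ F, ∀ h ∈ F, φ (g * h) s = (φ g) ((φ h) s))).card : ℝ)
      > (1 - 4 * (F.card : ℝ) ^ 2 * ε) * (Fintype.card A : ℝ)) := by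
  classical
  set n : ℝ := (Fintype.card A : ℝ) with hn_def
  have hn : 0 < n := by
    have := Fintype.card_pos (α := A)
    positivity
  have memFF : ∀ g ∈ F, g ∈ F * F := by
    intro g hg
    have := Finset.mul_mem_mul hg h1F
    simpa using this
  -- multiplicativity bound on cardinalities
  have key : ∀ g ∈ F * F, ∀ h ∈ F * F,
      ((Finset.univ.filter fun s : A => φ (g * h) s ≠ φ g (φ h s)).card : ℝ) < ε * n := by
    intro g hg h hh
    have h1 := hmul g hg h hh
    rw [hDist, div_lt_iff₀ hn] at h1
    simp [Equiv.Perm.mul_apply] at h1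
    exact h1
  -- separation bound: few fixed points
  have key2 : ∀ k ∈ F * F, k ≠ 1 →
      ((Finset.univ.filter fun s : A => φ k s = s).card : ℝ) < ε * n := by
    intro k hk hk1
    have h1 := hsep k hk hk1
    rw [hDist, gt_iff_lt, lt_div_iff₀ hn] at h1
    have hsplit : (Finset.univ.filter fun s : A => φ k s = s).card
        + (Finset.univ.filter fun s : A => ¬ (φ k s = s)).card = Fintype.card A := by
      simpa using Finset.card_filter_add_card_filter_not
        (s := (Finset.univ : Finset A)) (p := fun s : A => φ k s = s)
    have heq : (Finset.univ.filter fun a : A => (1 : Equiv.Perm A) a ≠ φ k a)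
        = Finset.univ.filter fun s : A => ¬ (φ k s = s) := by
      apply Finset.filter_congr
      intro x _
      simp [eq_comm]
    rw [heq] at h1
    have : ((Finset.univ.filter fun s : A => φ k s = s).card : ℝ)
        = n - ((Finset.univ.filter fun s : A => ¬ (φ k s = s)).card : ℝ) := by
      have := congrArg (fun m : ℕ => (m : ℝ)) hsplit
      push_cast at this
      linarith [this]
    rw [this]
    nlinarith [h1]
  -- separation bound for pairs
  have key1 : ∀ g ∈ F, ∀ h ∈ F, g ≠ h →
      ((Finset.univ.filter fun s : A => φ g s = φ h s).card : ℝ) < 2 * ε * n := by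
    intro g hg h hh hgh
    have hginv : g⁻¹ * h ∈ F * F := Finset.mul_mem_mul (hsym g hg) hh
    have hne1 : g⁻¹ * h ≠ 1 := by
      intro hc
      apply hgh
      have : g * (g⁻¹ * h) = g * 1 := by rw [hc]
      simpa [mul_assoc] using this.symm
    have hK := key g (memFF g hg) (g⁻¹ * h) hginv
    have hK2 := key2 (g⁻¹ * h) hginv hne1
    have hsub : (Finset.univ.filter fun s : A => φ g s = φ h s)
        ⊆ (Finset.univ.filter fun s : A => φ (g * (g⁻¹ * h)) s ≠ φ g (φ (g⁻¹ * h) s))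
          ∪ (Finset.univ.filter fun s : A => φ (g⁻¹ * h) s = s) := by
      intro s hs
      simp only [Finset.mem_filter, Finset.mem_univ, true_and] at hs
      by_cases hfix : φ (g⁻¹ * h) s = s
      · exact Finset.mem_union_right _ (by simp [hfix])
      · refine Finset.mem_union_left _ ?_
        simp only [Finset.mem_filter, Finset.mem_univ, true_and]
        intro hcon
        apply hfix
        have hgh' : g * (g⁻¹ * h) = h := by group
        rw [hgh'] at hcon
        have : φ g (φ (g⁻¹ * h) s) = φ g s := by rw [← hcon, hs]
        exact (Equiv.injective _ this)
    have hcard := Finset.card_le_card hsub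
    have hcard2 := Finset.card_union_le
      (Finset.univ.filter fun s : A => φ (g * (g⁻¹ * h)) s ≠ φ g (φ (g⁻¹ * h) s))
      (Finset.univ.filter fun s : A => φ (g⁻¹ * h) s = s)
    have := hcard.trans hcard2
    have hcast : ((Finset.univ.filter fun s : A => φ g s = φ h s).card : ℝ)
        ≤ ((Finset.univ.filter fun s : A => φ (g * (g⁻¹ * h)) s ≠ φ g (φ (g⁻¹ * h) s)).card : ℝ)
          + ((Finset.univ.filter fun s : A => φ (g⁻¹ * h) s = s).card : ℝ) := by
      exact_mod_cast this
    linarith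
  -- the bad set
  set f : G × G → Finset A := fun p =>
    Finset.univ.filter fun s : A =>
      (p.1 ≠ p.2 ∧ φ p.1 s = φ p.2 s) ∨ φ (p.1 * p.2) s ≠ φ p.1 (φ p.2 s) with hf_def
  set Bad : Finset A := (F ×ˢ F).biUnion f with hBad_def
  have hfbound : ∀ p ∈ F ×ˢ F, ((f p).card : ℝ) ≤ 3 * ε * n := by
    intro p hp
    obtain ⟨g, h⟩ := p
    rw [Finset.mem_product] at hp
    have hsplit : f (g, h) ⊆ (Finset.univ.filter fun s : A => g ≠ h ∧ φ g s = φ h s)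
        ∪ (Finset.univ.filter fun s : A => φ (g * h) s ≠ φ g (φ h s)) := by
      intro s hs
      simp only [hf_def, Finset.mem_filter, Finset.mem_univ, true_and] at hs
      rcases hs with hs | hs
      · exact Finset.mem_union_left _ (by simp [hs.1, hs.2])
      · exact Finset.mem_union_right _ (by simp [hs])
    have h2 : ((Finset.univ.filter fun s : A => φ (g * h) s ≠ φ g (φ h s)).card : ℝ)
        < ε * n := key g (memFF g hp.1) h (memFF h hp.2)
    have h1 : ((Finset.univ.filter fun s : A => g ≠ h ∧ φ g s = φ h s).card : ℝ)
        ≤ 2 * ε * n := by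
      by_cases hgh : g = h
      · have : (Finset.univ.filter fun s : A => g ≠ h ∧ φ g s = φ h s) = ∅ := by
          apply Finset.filter_false_of_mem
          intro x _
          simp [hgh]
        rw [this]
        simp only [Finset.card_empty, Nat.cast_zero]
        positivity
      · have heq : (Finset.univ.filter fun s : A => g ≠ h ∧ φ g s = φ h s)
            = Finset.univ.filter fun s : A => φ g s = φ h s := by
          apply Finset.filter_congr
          intro x _
          simp [hgh]
        rw [heq]
        exact (key1 g hp.1 h hp.2 hgh).le
    have hcard := Finset.card_le_card hsplit
    have hcard2 := Finset.card_union_le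
      (Finset.univ.filter fun s : A => g ≠ h ∧ φ g s = φ h s)
      (Finset.univ.filter fun s : A => φ (g * h) s ≠ φ g (φ h s))
    have hc : ((f (g, h)).card : ℝ)
        ≤ ((Finset.univ.filter fun s : A => g ≠ h ∧ φ g s = φ h s).card : ℝ)
          + ((Finset.univ.filter fun s : A => φ (g * h) s ≠ φ g (φ h s)).card : ℝ) := by
      exact_mod_cast hcard.trans hcard2
    linarith
  have hBadcard : ((Bad.card : ℝ)) ≤ (F.card : ℝ) ^ 2 * (3 * ε * n) := by
    have h1 : Bad.card ≤ ∑ p ∈ F ×ˢ F, (f p).card := Finset.card_biUnion_le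
    have h2 : ((∑ p ∈ F ×ˢ F, (f p).card : ℕ) : ℝ) ≤ ∑ p ∈ F ×ˢ F, (3 * ε * n) := by
      push_cast
      exact Finset.sum_le_sum hfbound
    have h3 : ∑ p ∈ F ×ˢ F, (3 * ε * n) = ((F ×ˢ F).card : ℝ) * (3 * ε * n) := by
      rw [Finset.sum_const]
      simp [nsmul_eq_mul]
    have h4 : ((F ×ˢ F).card : ℝ) = (F.card : ℝ) ^ 2 := by
      rw [Finset.card_product]
      push_cast
      ring
    have h5 : ((Bad.card : ℕ) : ℝ) ≤ ((∑ p ∈ F ×ˢ F, (f p).card : ℕ) : ℝ) := by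
      exact_mod_cast h1
    calc ((Bad.card : ℕ) : ℝ) ≤ _ := h5
      _ ≤ ∑ p ∈ F ×ˢ F, (3 * ε * n) := h2
      _ = (F.card : ℝ) ^ 2 * (3 * ε * n) := by rw [h3, h4]
  -- good set contains complement of Bad
  set Good : Finset A := Finset.univ.filter fun s : A =>
      (∀ g ∈ F, ∀ h ∈ F, g ≠ h → φ g s ≠ φ h s) ∧
      (∀ g ∈ F, ∀ h ∈ F, φ (g * h) s = (φ g) ((φ h) s)) with hGood_def
  have hsub : Finset.univ \ Bad ⊆ Good := by
    intro s hs
    simp only [Finset.mem_sdiff, Finset.mem_univ, true_and] at hs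
    simp only [hGood_def, Finset.mem_filter, Finset.mem_univ, true_and]
    have hforall : ∀ g ∈ F, ∀ h ∈ F,
        ¬ ((g ≠ h ∧ φ g s = φ h s) ∨ φ (g * h) s ≠ φ g (φ h s)) := by
      intro g hg h hh hcon
      apply hs
      rw [hBad_def]
      refine Finset.mem_biUnion.2 ⟨(g, h), Finset.mem_product.2 ⟨hg, hh⟩, ?_⟩
      simp only [hf_def, Finset.mem_filter, Finset.mem_univ, true_and]
      exact hcon
    constructor
    · intro g hg h hh hgh hcon
      exact hforall g hg h hh (Or.inl ⟨hgh, hcon⟩)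
    · intro g hg h hh
      by_contra hcon
      exact hforall g hg h hh (Or.inr hcon)
  have hgoodcard : ((Good.card : ℝ)) ≥ n - (Bad.card : ℝ) := by
    have h1 : (Finset.univ \ Bad).card = Fintype.card A - Bad.card := by
      rw [Finset.card_sdiff_of_subset (Finset.subset_univ _)]
      simp
    have h2 : (Finset.univ \ Bad).card ≤ Good.card := Finset.card_le_card hsub
    have h3 : Bad.card ≤ Fintype.card A := by
      simpa using Finset.card_le_card (Finset.subset_univ Bad)
    have h4 : ((Finset.univ \ Bad).card : ℝ) = n - (Bad.card : ℝ) := by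
      rw [h1]
      push_cast [Nat.cast_sub h3]
      rfl
    calc ((Good.card : ℝ)) ≥ ((Finset.univ \ Bad).card : ℝ) := by exact_mod_cast h2
      _ = n - (Bad.card : ℝ) := h4
  have hFpos : (0 : ℝ) < (F.card : ℝ) := by
    have : 0 < F.card := Finset.card_pos.2 ⟨1, h1F⟩
    exact_mod_cast this
  have hfinal : n - (F.card : ℝ) ^ 2 * (3 * ε * n) > (1 - 4 * (F.card : ℝ) ^ 2 * ε) * n := by
    nlinarith [mul_pos (mul_pos (pow_pos hFpos 2) hε) hn]
  calc ((Good.card : ℝ)) ≥ n - (Bad.card : ℝ) := hgoodcard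
    _ ≥ n - (F.card : ℝ) ^ 2 * (3 * ε * n) := by linarith
    _ > (1 - 4 * (F.card : ℝ) ^ 2 * ε) * n := hfinal
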